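/- arXiv:1310.5063 — 2 statements merged into one kernel-verified Lean document; each statement's English description precedes it below -/
import Mathlib

section
/- Let k ≥ 1 be an integer and y₀ > 0. Define u on 𝕋 × [0,∞) (𝕋 = ℝ/ℤ) by u(x,y) = e^{2πikx} sinh(2πky)/sinh(2πky₀) for 0 ≤ y ≤ y₀ and u(x,y) = e^{2πikx} e^{−2πk(y−y₀)} for y ≥ y₀. Then u is continuous, u(x,0) = 0, u(x,y₀) = e^{2πikx}, and ∫_0^∞ ∫_0^1 |∇u(x,y)|² dx dy = 4πk/(1 − e^{−4πky₀}), where |∇u|² = |∂_x u|² + |∂_y u|² with |·| the complex modulus. -/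
open MeasureTheory Set Filter

lemma fderiv_apply_of_hasDeriv {A B : ℝ → ℂ} {A' B' : ℂ} {x y : ℝ}
    (hA : HasDerivAt A A' x) (hB : HasDerivAt B B' y) (u : ℝ × ℝ → ℂ)
    (hu : u =ᶠ[nhds (x, y)] fun p => A p.1 * B p.2) :
    fderiv ℝ u (x, y) (1, 0) = A' * B y ∧ fderiv ℝ u (x, y) (0, 1) = A x * B' := by
  have hf : HasFDerivAt (fun p : ℝ × ℝ => A p.1)
      ((ContinuousLinearMap.smulRight (1 : ℝ →L[ℝ] ℝ) A').comp
        (ContinuousLinearMap.fst ℝ ℝ ℝ)) (x, y) :=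
    hA.hasFDerivAt.comp (x, y) hasFDerivAt_fst
  have hg : HasFDerivAt (fun p : ℝ × ℝ => B p.2)
      ((ContinuousLinearMap.smulRight (1 : ℝ →L[ℝ] ℝ) B').comp
        (ContinuousLinearMap.snd ℝ ℝ ℝ)) (x, y) :=
    hB.hasFDerivAt.comp (x, y) hasFDerivAt_snd
  have hmul := (hf.fun_mul hg).fderiv
  rw [hu.fderiv_eq, hmul]
  constructor <;> simp [mul_comm]

/-- **The harmonic extension minimizing the Dirichlet energy and its energy.**
Let `k ≥ 1`, `y₀ > 0` and let `u(x,y) = e^{2πikx} sinh(2πky)/sinh(2πky₀)` for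
`0 ≤ y ≤ y₀` and `u(x,y) = e^{2πikx} e^{-2πk(y-y₀)}` for `y ≥ y₀`.  Then `u` is continuous
on `𝕋 × [0,∞)`, vanishes for `y = 0`, equals `e^{2πikx}` on `y = y₀`, and its Dirichlet
energy `∫_0^∞ ∫_0^1 (|∂_x u|² + |∂_y u|²) dx dy` equals `4πk/(1 - e^{-4πky₀})`. -/
theorem harmonic_extension_energy (k : ℤ) (hk : 1 ≤ k) (y₀ : ℝ) (hy₀ : 0 < y₀)
    (u : ℝ × ℝ → ℂ)
    (hu_low : ∀ x y : ℝ, 0 ≤ y → y ≤ y₀ →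
      u (x, y) = Complex.exp (2 * Real.pi * Complex.I * k * x) *
        ((Real.sinh (2 * Real.pi * k * y) / Real.sinh (2 * Real.pi * k * y₀) : ℝ) : ℂ))
    (hu_high : ∀ x y : ℝ, y₀ ≤ y →
      u (x, y) = Complex.exp (2 * Real.pi * Complex.I * k * x) *
        ((Real.exp (-(2 * Real.pi * k * (y - y₀))) : ℝ) : ℂ)) :
    ContinuousOn u {p : ℝ × ℝ | 0 ≤ p.2} ∧
    (∀ x : ℝ, u (x, 0) = 0) ∧
    (∀ x : ℝ, u (x, y₀) = Complex.exp (2 * Real.pi * Complex.I * k * x)) ∧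
    (∫ y in Set.Ioi (0 : ℝ), ∫ x in (0 : ℝ)..1,
        (‖fderiv ℝ u (x, y) (1, 0)‖ ^ 2 + ‖fderiv ℝ u (x, y) (0, 1)‖ ^ 2)) =
      4 * Real.pi * k / (1 - Real.exp (-4 * Real.pi * k * y₀)) := by
  have hkR : (1 : ℝ) ≤ (k : ℝ) := by exact_mod_cast hk
  set a : ℝ := 2 * Real.pi * k with ha_def
  have ha : 0 < a := by
    have := Real.pi_pos; nlinarith
  set S : ℝ := Real.sinh (a * y₀) with hS_def
  have hS : 0 < S := Real.sinh_pos_iff.mpr (mul_pos ha hy₀)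
  set c₁ : ℂ := 2 * Real.pi * Complex.I * k with hc₁_def
  have hc₁ : c₁ = ((a : ℝ) : ℂ) * Complex.I := by
    rw [hc₁_def, ha_def]; push_cast; ring
  clear_value a S c₁
  -- derivative of the x-factor
  have hA : ∀ x : ℝ, HasDerivAt (fun t : ℝ => Complex.exp (c₁ * t))
      (c₁ * Complex.exp (c₁ * x)) x := by
    intro x
    have h0 : HasDerivAt (fun t : ℝ => c₁ * (t : ℂ)) c₁ x := by
      simpa using (Complex.ofRealCLM.hasDerivAt (x := x)).const_mul c₁
    simpa [mul_comm] using h0.cexp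
  have hnA : ∀ x : ℝ, ‖Complex.exp (c₁ * x)‖ = 1 := by
    intro x
    have h : c₁ * x = ((a * x : ℝ) : ℂ) * Complex.I := by rw [hc₁]; push_cast; ring
    rw [h, Complex.norm_exp_ofReal_mul_I]
  have hnc₁ : ‖c₁‖ = a := by
    rw [hc₁, norm_mul, Complex.norm_I, mul_one, Complex.norm_real, Real.norm_eq_abs,
      abs_of_pos ha]
  -- trivial boundary facts
  have hbd0 : ∀ x : ℝ, u (x, 0) = 0 := by
    intro x
    rw [hu_low x 0 le_rfl hy₀.le]
    simp
  have hbd1 : ∀ x : ℝ, u (x, y₀) = Complex.exp (c₁ * x) := by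
    intro x
    rw [hu_high x y₀ le_rfl]
    simp
  -- continuity
  have hcont : ContinuousOn u {p : ℝ × ℝ | 0 ≤ p.2} := by
    have hf : Continuous fun p : ℝ × ℝ => Complex.exp (c₁ * p.1) *
        ((if p.2 ≤ y₀ then Real.sinh (a * p.2) / S
          else Real.exp (-(a * (p.2 - y₀))) : ℝ) : ℂ) := by
      apply Continuous.mul
      · exact Complex.continuous_exp.comp
          (continuous_const.mul (Complex.continuous_ofReal.comp continuous_fst))
      · refine Complex.continuous_ofReal.comp ?_
        apply Continuous.if_le
        · exact (Real.continuous_sinh.comp (continuous_const.mul continuous_snd)).div_const S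
        · exact Real.continuous_exp.comp
            ((continuous_const.mul (continuous_snd.sub continuous_const)).neg)
        · exact continuous_snd
        · exact continuous_const
        · intro p hp
          rw [hp, sub_self, mul_zero, neg_zero, Real.exp_zero, ← hS_def, div_self hS.ne']
    refine hf.continuousOn.congr ?_
    rintro ⟨x, y⟩ hy
    simp only [Set.mem_setOf_eq] at hy
    by_cases hyy : y ≤ y₀
    · rw [hu_low x y hy hyy]; simp [hyy]
    · rw [hu_high x y (le_of_not_ge hyy)]; simp [hyy]
  refine ⟨hcont, hbd0, hbd1, ?_⟩
  -- ENERGY COMPUTATION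
  -- the low-region y-factor and its derivative
  have hBlow : ∀ t : ℝ, HasDerivAt (fun s : ℝ => ((Real.sinh (a * s) / S : ℝ) : ℂ))
      (((a * Real.cosh (a * t) / S : ℝ)) : ℂ) t := by
    intro t
    have h0 : HasDerivAt (fun s : ℝ => a * s) a t := by
      simpa using (hasDerivAt_id t).const_mul a
    have h1 := (h0.sinh).div_const S
    have h2 : Real.cosh (a * t) * a / S = a * Real.cosh (a * t) / S := by ring
    rw [h2] at h1
    exact h1.ofReal_comp
  have hBhigh : ∀ t : ℝ, HasDerivAt (fun s : ℝ => ((Real.exp (-(a * (s - y₀))) : ℝ) : ℂ))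
      (((-a * Real.exp (-(a * (t - y₀))) : ℝ)) : ℂ) t := by
    intro t
    have h0 : HasDerivAt (fun s : ℝ => -(a * (s - y₀))) (-a) t := by
      simpa using (((hasDerivAt_id t).sub_const y₀).const_mul a).fun_neg
    have h1 := h0.exp
    have h2 : Real.exp (-(a * (t - y₀))) * -a = -a * Real.exp (-(a * (t - y₀))) := by ring
    rw [h2] at h1
    exact h1.ofReal_comp
  -- local identification of u
  have hu_eq_low : ∀ x y : ℝ, 0 < y → y < y₀ →
      u =ᶠ[nhds (x, y)] fun p : ℝ × ℝ =>
        Complex.exp (c₁ * p.1) * ((Real.sinh (a * p.2) / S : ℝ) : ℂ) := by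
    intro x y hy1 hy2
    have hopen : IsOpen {p : ℝ × ℝ | 0 < p.2 ∧ p.2 < y₀} :=
      (isOpen_lt continuous_const continuous_snd).inter
        (isOpen_lt continuous_snd continuous_const)
    filter_upwards [hopen.mem_nhds ⟨hy1, hy2⟩] with p hp
    have h := hu_low p.1 p.2 hp.1.le hp.2.le
    simpa using h
  have hu_eq_high : ∀ x y : ℝ, y₀ < y →
      u =ᶠ[nhds (x, y)] fun p : ℝ × ℝ =>
        Complex.exp (c₁ * p.1) * ((Real.exp (-(a * (p.2 - y₀))) : ℝ) : ℂ) := by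
    intro x y hy1
    have hopen : IsOpen {p : ℝ × ℝ | y₀ < p.2} :=
      isOpen_lt continuous_const continuous_snd
    filter_upwards [hopen.mem_nhds hy1] with p hp
    have h := hu_high p.1 p.2 (le_of_lt hp)
    simpa using h
  -- inner integral values
  set g : ℝ → ℝ := fun y => a ^ 2 * (Real.sinh (a * y) / S) ^ 2
      + (a * Real.cosh (a * y) / S) ^ 2 with hg_def
  set h : ℝ → ℝ := fun y => 2 * a ^ 2 * (Real.exp (-(a * (y - y₀)))) ^ 2 with hh_def
  set F : ℝ → ℝ := fun y => ∫ x in (0 : ℝ)..1,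
      (‖fderiv ℝ u (x, y) (1, 0)‖ ^ 2 + ‖fderiv ℝ u (x, y) (0, 1)‖ ^ 2) with hF_def
  have hFlow : ∀ y ∈ Set.Ioo (0 : ℝ) y₀, F y = g y := by
    intro y hy
    have key : ∀ x : ℝ,
        ‖fderiv ℝ u (x, y) (1, 0)‖ ^ 2 + ‖fderiv ℝ u (x, y) (0, 1)‖ ^ 2 = g y := by
      intro x
      obtain ⟨h1, h2⟩ := fderiv_apply_of_hasDeriv (hA x) (hBlow y) u
        (hu_eq_low x y hy.1 hy.2)
      rw [h1, h2, norm_mul, norm_mul, norm_mul, hnA, hnc₁, Complex.norm_real,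
        Complex.norm_real, Real.norm_eq_abs, Real.norm_eq_abs, hg_def]
      rw [mul_one, one_mul]
      rw [mul_pow, sq_abs, sq_abs]
    rw [hF_def]
    simp only []
    rw [intervalIntegral.integral_congr (g := fun _ : ℝ => g y) (fun x _ => key x)]
    simp
  have hFhigh : ∀ y ∈ Set.Ioi y₀, F y = h y := by
    intro y hy
    have key : ∀ x : ℝ,
        ‖fderiv ℝ u (x, y) (1, 0)‖ ^ 2 + ‖fderiv ℝ u (x, y) (0, 1)‖ ^ 2 = h y := by
      intro x
      obtain ⟨h1, h2⟩ := fderiv_apply_of_hasDeriv (hA x) (hBhigh y) u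
        (hu_eq_high x y hy)
      rw [h1, h2, norm_mul, norm_mul, norm_mul, hnA, hnc₁, Complex.norm_real,
        Complex.norm_real, Real.norm_eq_abs, Real.norm_eq_abs, hh_def]
      rw [mul_one, one_mul]
      rw [mul_pow, sq_abs, sq_abs]
      show _ = 2 * a ^ 2 * Real.exp (-(a * (y - y₀))) ^ 2
      ring
    rw [hF_def]
    simp only []
    rw [intervalIntegral.integral_congr (g := fun _ : ℝ => h y) (fun x _ => key x)]
    simp
  -- split the outer integral
  have hg_cont : Continuous g := by
    rw [hg_def]; fun_prop
  have hint_g : IntegrableOn g (Set.Ioo 0 y₀) := by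
    exact (hg_cont.integrableOn_Icc (a := 0) (b := y₀)).mono_set Ioo_subset_Icc_self
  have hint_F_low : IntegrableOn F (Set.Ioo 0 y₀) :=
    hint_g.congr_fun (fun y hy => (hFlow y hy).symm) measurableSet_Ioo
  have h_as_exp : h = fun y => (2 * a ^ 2 * Real.exp (2 * a * y₀)) * Real.exp (-(2 * a) * y) := by
    funext y
    have hexp : (Real.exp (-(a * (y - y₀)))) ^ 2
        = Real.exp (2 * a * y₀) * Real.exp (-(2 * a) * y) := by
      rw [show (Real.exp (-(a * (y - y₀)))) ^ 2
          = Real.exp (-(a * (y - y₀))) * Real.exp (-(a * (y - y₀))) from sq _,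
        ← Real.exp_add, ← Real.exp_add]
      congr 1
      ring
    rw [hh_def]
    show 2 * a ^ 2 * (Real.exp (-(a * (y - y₀)))) ^ 2 = _
    rw [hexp]
    ring
  have hint_h : IntegrableOn h (Set.Ioi y₀) := by
    rw [h_as_exp]
    exact (exp_neg_integrableOn_Ioi y₀ (by linarith : (0:ℝ) < 2 * a)).const_mul _
  have hint_F_high : IntegrableOn F (Set.Ioi y₀) :=
    hint_h.congr_fun (fun y hy => (hFhigh y hy).symm) measurableSet_Ioi
  have haeq : (Set.Ioo (0:ℝ) y₀ ∪ Set.Ioi y₀ : Set ℝ) =ᵐ[volume] Set.Ioi (0:ℝ) := by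
    have hne : ∀ᵐ y : ℝ, y ≠ y₀ := by
      refine MeasureTheory.ae_iff.2 ?_
      simpa using measure_singleton (α := ℝ) y₀
    rw [Filter.eventuallyEq_set]
    filter_upwards [hne] with y hy
    simp only [Set.mem_union, Set.mem_Ioo, Set.mem_Ioi]
    constructor
    · rintro (⟨h0, _⟩ | h0)
      · exact h0
      · linarith
    · intro h0
      rcases lt_trichotomy y y₀ with hlt | heq | hgt
      · exact Or.inl ⟨h0, hlt⟩
      · exact absurd heq hy
      · exact Or.inr hgt
  have hsplit : (∫ y in Set.Ioi (0:ℝ), F y)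
      = (∫ y in Set.Ioo (0:ℝ) y₀, F y) + ∫ y in Set.Ioi y₀, F y := by
    rw [← MeasureTheory.setIntegral_congr_set haeq]
    have hdisj : Disjoint (Set.Ioo (0:ℝ) y₀) (Set.Ioi y₀) := by
      rw [Set.disjoint_left]
      intro t ht h3
      rw [Set.mem_Ioo] at ht
      rw [Set.mem_Ioi] at h3
      linarith [ht.2]
    exact MeasureTheory.setIntegral_union hdisj
      measurableSet_Ioi hint_F_low hint_F_high
  -- low part value
  have hval_low : (∫ y in Set.Ioo (0:ℝ) y₀, F y)
      = a * (Real.sinh (a * y₀) * Real.cosh (a * y₀)) / S ^ 2 := by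
    rw [MeasureTheory.setIntegral_congr_fun measurableSet_Ioo hFlow]
    rw [← MeasureTheory.integral_Ioc_eq_integral_Ioo,
      ← intervalIntegral.integral_of_le hy₀.le]
    have hderiv : ∀ t ∈ Set.uIcc (0:ℝ) y₀,
        HasDerivAt (fun t => a * (Real.sinh (a * t) * Real.cosh (a * t)) / S ^ 2) (g t) t := by
      intro t _
      have h0 : HasDerivAt (fun s : ℝ => a * s) a t := by
        simpa using (hasDerivAt_id t).const_mul a
      have h1 := ((h0.sinh).fun_mul (h0.cosh)).const_mul a |>.div_const (S ^ 2)
      refine HasDerivAt.congr_deriv h1 (Eq.symm ?_)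
      rw [hg_def]
      simp only []
      field_simp
      ring
    rw [intervalIntegral.integral_eq_sub_of_hasDerivAt hderiv
      (hg_cont.intervalIntegrable 0 y₀)]
    simp
  -- high part value
  have hval_high : (∫ y in Set.Ioi y₀, F y) = a := by
    rw [MeasureTheory.setIntegral_congr_fun measurableSet_Ioi hFhigh]
    have hderiv : ∀ t ∈ Set.Ioi y₀,
        HasDerivAt (fun t => -a * (Real.exp (-(a * (t - y₀)))) ^ 2) (h t) t := by
      intro t _
      have h0 : HasDerivAt (fun s : ℝ => -(a * (s - y₀))) (-a) t := by
        simpa using (((hasDerivAt_id t).sub_const y₀).const_mul a).fun_neg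
      have h1 := ((h0.exp).fun_pow 2).const_mul (-a)
      refine HasDerivAt.congr_deriv h1 (Eq.symm ?_)
      rw [hh_def]
      simp only []
      ring
    have hcontΨ : ContinuousWithinAt (fun t => -a * (Real.exp (-(a * (t - y₀)))) ^ 2)
        (Set.Ici y₀) y₀ := by
      apply Continuous.continuousWithinAt
      fun_prop
    have htend : Tendsto (fun t => -a * (Real.exp (-(a * (t - y₀)))) ^ 2) atTop (nhds 0) := by
      have h2 : Tendsto (fun y : ℝ => a * (y - y₀)) atTop atTop := by
        apply Tendsto.const_mul_atTop ha
        simpa [sub_eq_add_neg] using tendsto_atTop_add_const_right atTop (-y₀) tendsto_id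
      have h3 : Tendsto (fun y : ℝ => -(a * (y - y₀))) atTop atBot :=
        tendsto_neg_atTop_atBot.comp h2
      have h4 : Tendsto (fun y : ℝ => Real.exp (-(a * (y - y₀)))) atTop (nhds 0) :=
        Real.tendsto_exp_atBot.comp h3
      have h5 := (h4.pow 2).const_mul (-a)
      simpa using h5
    rw [MeasureTheory.integral_Ioi_of_hasDerivAt_of_tendsto hcontΨ hderiv hint_h htend]
    simp
  rw [hsplit, hval_low, hval_high]
  -- final algebra
  have hT : 0 < a * y₀ := mul_pos ha hy₀
  have hgoalrhs : (-4 : ℝ) * Real.pi * k * y₀ = -(2 * (a * y₀)) := by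
    rw [ha_def]; ring
  rw [hgoalrhs]
  have h4pk : (4 : ℝ) * Real.pi * k = 2 * a := by rw [ha_def]; ring
  rw [h4pk, hS_def]
  set T : ℝ := a * y₀ with hT_def
  have hsinh_pos : 0 < Real.sinh T := Real.sinh_pos_iff.mpr hT
  have hq : (0 : ℝ) < Real.exp T := Real.exp_pos T
  have hq1 : (1 : ℝ) < Real.exp T := by
    rw [← Real.exp_zero]
    exact Real.exp_lt_exp.2 hT
  have he2 : Real.exp (-(2 * T)) = (Real.exp T * Real.exp T)⁻¹ := by
    rw [Real.exp_neg, ← Real.exp_add]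
    norm_num [two_mul]
  rw [Real.sinh_eq, Real.cosh_eq, he2, Real.exp_neg]
  set q := Real.exp T with hq_def
  have hq0 : q ≠ 0 := ne_of_gt hq
  have hqinv : q⁻¹ < 1 := by
    rw [inv_lt_one_iff₀]
    right; exact hq1
  have hqqinv : (q * q)⁻¹ < 1 := by
    rw [inv_lt_one_iff₀]
    right; nlinarith
  have hden : 1 - (q * q)⁻¹ ≠ 0 := by
    intro hc
    nlinarith [hqqinv]
  have hq2 : (1 : ℝ) < q * q := by nlinarith
  have hden2 : q * q - 1 ≠ 0 := by nlinarith
  have e1 : q - q⁻¹ = (q * q - 1) / q := by field_simp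
  have e2 : q + q⁻¹ = (q * q + 1) / q := by field_simp
  have e3 : (1 : ℝ) - (q * q)⁻¹ = (q * q - 1) / (q * q) := by field_simp
  rw [e1, e2, e3]
  field_simp [hq0, hden2]
  ring_nf
  field_simp [show (-1 + q ^ 2) ≠ 0 by nlinarith]
  ring
end

section
/- Let N ≥ 1 and J ≥ 3 be integers, and let A ⊆ ℤ_N × ℤ be a finite set of cardinality T that is connected in the nearest-neighbor graph of ℤ_N × ℤ, contains a point whose second coordinate is ≤ 0, and contains a point whose second coordinate is ≥ J·N. Then there exists n' ∈ A with N ≤ n'₂ ≤ J·N such that #{m ∈ A : n'₂ − N/2 ≤ m₂ < n'₂ + N/2} ≤ T/(J − 2). -/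
/-- Nearest-neighbor adjacency on the cylinder lattice `ℤ_N × ℤ`: two sites are adjacent
when they differ by `±1` in exactly one coordinate (the first coordinate mod `N`). -/
def cylAdj {N : ℕ} (m n : ZMod N × ℤ) : Prop :=
  (m.1 = n.1 ∧ (m.2 = n.2 + 1 ∨ m.2 = n.2 - 1)) ∨
    (m.2 = n.2 ∧ (m.1 = n.1 + 1 ∨ m.1 = n.1 - 1))

lemma reach_height {N : ℕ} {A : Set (ZMod N × ℤ)} {x y : ZMod N × ℤ}
    (hx : x ∈ A)
    (hp : Relation.ReflTransGen (fun a b => a ∈ A ∧ b ∈ A ∧ cylAdj a b) x y)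
    (h : ℤ) (h1 : x.2 ≤ h) (h2 : h ≤ y.2) : ∃ a ∈ A, a.2 = h := by
  induction hp with
  | refl => exact ⟨x, hx, le_antisymm h1 h2⟩
  | @tail b c hxb hbc ih =>
    obtain ⟨hb, hc, hadj⟩ := hbc
    by_cases hle : h ≤ b.2
    · exact ih hle
    · have hcb : c.2 ≤ b.2 + 1 := by
        rcases hadj with ⟨_, h' | h'⟩ | ⟨h', _⟩ <;> omega
      exact ⟨c, hc, by omega⟩

/-- **A connected set crossing many bands has a sparse band.**  If `A ⊆ ℤ_N × ℤ` is a
finite connected set of cardinality `T` containing a point of height `≤ 0` and a point of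
height `≥ J·N` (with `N ≥ 1`, `J ≥ 3`), then some `n' ∈ A` with `N ≤ n'₂ ≤ J·N` satisfies
`#{m ∈ A : n'₂ - N/2 ≤ m₂ < n'₂ + N/2} ≤ T/(J-2)`. -/
theorem connected_set_sparse_band (N J : ℕ) (hN : 1 ≤ N) (hJ : 3 ≤ J)
    (A : Set (ZMod N × ℤ)) (hfin : A.Finite) (T : ℕ) (hcard : A.ncard = T)
    (hconn : ∀ x ∈ A, ∀ y ∈ A,
      Relation.ReflTransGen (fun a b => a ∈ A ∧ b ∈ A ∧ cylAdj a b) x y)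
    (hlow : ∃ n ∈ A, n.2 ≤ 0) (hhigh : ∃ n ∈ A, (J * N : ℤ) ≤ n.2) :
    ∃ n' ∈ A, (N : ℤ) ≤ n'.2 ∧ n'.2 ≤ (J * N : ℤ) ∧
      ((A ∩ {m : ZMod N × ℤ |
          (n'.2 : ℝ) - N / 2 ≤ (m.2 : ℝ) ∧ (m.2 : ℝ) < (n'.2 : ℝ) + N / 2}).ncard : ℝ)
        ≤ (T : ℝ) / ((J : ℝ) - 2) := by
  classical
  obtain ⟨x, hx, hx2⟩ := hlow
  obtain ⟨y, hy, hy2⟩ := hhigh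
  have hpath := hconn x hx y hy
  set F : Finset (ZMod N × ℤ) := hfin.toFinset with hF
  have hFcard : F.card = T := by
    rw [← hcard, Set.ncard_eq_toFinset_card A hfin]
  -- bands
  set Bf : ℕ → Finset (ZMod N × ℤ) := fun k =>
    F.filter (fun m => ((k : ℝ) * N - N / 2 ≤ (m.2 : ℝ) ∧ (m.2 : ℝ) < (k : ℝ) * N + N / 2))
    with hBf
  have hdisj : ∀ k ∈ Finset.Icc 1 (J - 2), ∀ l ∈ Finset.Icc 1 (J - 2), k ≠ l →
      Disjoint (Bf k) (Bf l) := by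
    intro k _ l _ hkl
    rw [Finset.disjoint_left]
    intro m hmk hml
    simp only [hBf, Finset.mem_filter] at hmk hml
    obtain ⟨-, hk1, hk2⟩ := hmk
    obtain ⟨-, hl1, hl2⟩ := hml
    have hN' : (1 : ℝ) ≤ (N : ℝ) := by exact_mod_cast hN
    rcases lt_or_gt_of_ne hkl with h | h
    · have : (k : ℝ) + 1 ≤ (l : ℝ) := by exact_mod_cast h
      nlinarith
    · have : (l : ℝ) + 1 ≤ (k : ℝ) := by exact_mod_cast h
      nlinarith
  have hsum : ∑ k ∈ Finset.Icc 1 (J - 2), (Bf k).card ≤ T := by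
    rw [← Finset.card_biUnion hdisj, ← hFcard]
    exact Finset.card_le_card (Finset.biUnion_subset.mpr fun k _ =>
      Finset.filter_subset _ _)
  -- pigeonhole
  have hJ2 : (0 : ℝ) < (J : ℝ) - 2 := by
    have : (3 : ℝ) ≤ (J : ℝ) := by exact_mod_cast hJ
    linarith
  have hpig : ∃ k ∈ Finset.Icc 1 (J - 2), ((Bf k).card : ℝ) ≤ (T : ℝ) / ((J : ℝ) - 2) := by
    by_contra hcon
    push_neg at hcon
    have hlt : ∀ k ∈ Finset.Icc 1 (J - 2), (T : ℝ) / ((J : ℝ) - 2) < ((Bf k).card : ℝ) :=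
      hcon
    have hne : (Finset.Icc 1 (J - 2)).Nonempty := by
      simp only [Finset.nonempty_Icc]; omega
    have hsum' : (Finset.Icc 1 (J - 2)).card • ((T : ℝ) / ((J : ℝ) - 2)) <
        ∑ k ∈ Finset.Icc 1 (J - 2), ((Bf k).card : ℝ) := by
      rw [← Finset.sum_const]
      exact Finset.sum_lt_sum_of_nonempty hne hlt
    have hcardIcc : (Finset.Icc 1 (J - 2)).card = J - 2 := by
      rw [Nat.card_Icc]; omega
    have hJ2' : ((J - 2 : ℕ) : ℝ) = (J : ℝ) - 2 := by
      push_cast [Nat.cast_sub (by omega : 2 ≤ J)]; ring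
    rw [hcardIcc, nsmul_eq_mul, hJ2', mul_div_cancel₀ _ (ne_of_gt hJ2)] at hsum'
    have : ∑ k ∈ Finset.Icc 1 (J - 2), ((Bf k).card : ℝ) ≤ (T : ℝ) := by
      exact_mod_cast hsum
    linarith
  obtain ⟨k, hkmem, hkle⟩ := hpig
  simp only [Finset.mem_Icc] at hkmem
  obtain ⟨hk1, hk2⟩ := hkmem
  -- find a point of height k*N
  obtain ⟨n', hn'A, hn'h⟩ := reach_height hx hpath ((k : ℤ) * N)
    (by
      have : (0 : ℤ) ≤ (k : ℤ) * N := by positivity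
      omega) (by
      have : (k : ℤ) * N ≤ (J : ℤ) * N := by
        have : (k : ℤ) ≤ J := by exact_mod_cast (by omega : k ≤ J)
        nlinarith [(by exact_mod_cast hN : (1 : ℤ) ≤ (N : ℤ))]
      exact this.trans (by exact_mod_cast hy2))
  refine ⟨n', hn'A, ?_, ?_, ?_⟩
  · rw [hn'h]
    have : (1 : ℤ) ≤ (k : ℤ) := by exact_mod_cast hk1
    nlinarith [(by exact_mod_cast hN : (1 : ℤ) ≤ (N : ℤ))]
  · rw [hn'h]
    have : (k : ℤ) ≤ J := by exact_mod_cast (by omega : k ≤ J)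
    nlinarith [(by exact_mod_cast hN : (1 : ℤ) ≤ (N : ℤ))]
  · have hset : A ∩ {m : ZMod N × ℤ |
        (n'.2 : ℝ) - N / 2 ≤ (m.2 : ℝ) ∧ (m.2 : ℝ) < (n'.2 : ℝ) + N / 2} = ↑(Bf k) := by
      ext m
      simp only [hBf, Finset.coe_filter, Set.mem_inter_iff, Set.mem_setOf_eq, hF,
        Set.Finite.mem_toFinset, hn'h]
      constructor
      · rintro ⟨hm, h1, h2⟩
        refine ⟨hm, ?_, ?_⟩ <;> · push_cast at h1 h2 ⊢; linarith
      · rintro ⟨hm, h1, h2⟩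
        refine ⟨hm, ?_, ?_⟩ <;> · push_cast at h1 h2 ⊢; linarith
    rw [hset, Set.ncard_coe_finset]
    exact hkle
end
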